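/- Let [·,·] be a Helson form on ℂ[z_1, z_2, …] of finite rank. Then ∑_{n,m≥1} [z^{κ(nm)}, 1] f_n \overline{f_m} ≥ 0 for every finitely supported complex sequence (f_n) if and only if there exist finitely many points λ^{(ℓ)} ∈ ℝ^∞ (viewed inside ℂ^∞) and positive real numbers c^{(ℓ)} such that [f, g] = ∑_ℓ c^{(ℓ)} f(λ^{(ℓ)}) g(λ^{(ℓ)}) for all polynomials f, g. -/

import Mathlib

open Finset
open scoped BigOperators ComplexOrder

/-- The kernel ideal `{f : [f,g] = 0 ∀ g}` of a bilinear form, as a subspace. -/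
noncomputable def kerForm (B : MvPolynomial ℕ ℂ →ₗ[ℂ] MvPolynomial ℕ ℂ →ₗ[ℂ] ℂ) :
    Submodule ℂ (MvPolynomial ℕ ℂ) :=
  ⨅ g : MvPolynomial ℕ ℂ, LinearMap.ker (B.flip g)

/-- The monomial `z^{κ(n)}`, where `n = ∏_j p_j^{κ_j}` is the prime
factorization of `n` and the variable `X j` corresponds to the `j`-th prime. -/
noncomputable def monOf (n : ℕ) : MvPolynomial ℕ ℂ :=
  n.factorization.prod fun p e => MvPolynomial.X (Nat.count Nat.Prime p) ^ e

section HelsonAux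

local notation "P" => MvPolynomial ℕ ℂ
local notation "conj'" => starRingEnd ℂ

lemma mem_kerForm {B : MvPolynomial ℕ ℂ →ₗ[ℂ] MvPolynomial ℕ ℂ →ₗ[ℂ] ℂ}
    {f : MvPolynomial ℕ ℂ} : f ∈ kerForm B ↔ ∀ g, B f g = 0 := by
  simp [kerForm, Submodule.mem_iInf, LinearMap.mem_ker]

noncomputable def sigC : MvPolynomial ℕ ℂ →+* MvPolynomial ℕ ℂ :=
  MvPolynomial.map (starRingEnd ℂ)

lemma sigC_sigC (p : MvPolynomial ℕ ℂ) : sigC (sigC p) = p := by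
  simp only [sigC, MvPolynomial.map_map]
  have : (starRingEnd ℂ).comp (starRingEnd ℂ) = RingHom.id ℂ := by
    ext x; exact Complex.conj_conj x
  rw [this, MvPolynomial.map_id]

lemma sigC_C (c : ℂ) : sigC (MvPolynomial.C c) = MvPolynomial.C ((starRingEnd ℂ) c) :=
  MvPolynomial.map_C _ _

lemma sigC_X (j : ℕ) : sigC (MvPolynomial.X j) = MvPolynomial.X j :=
  MvPolynomial.map_X _ _

lemma monOf_mul {a b : ℕ} (ha : a ≠ 0) (hb : b ≠ 0) :
    monOf (a * b) = monOf a * monOf b := by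
  rw [monOf, Nat.factorization_mul ha hb, Finsupp.prod_add_index]
  · rfl
  · intro p _; exact pow_zero _
  · intro p _ e1 e2; exact pow_add _ _ _

noncomputable def enc (κ : ℕ →₀ ℕ) : ℕ := κ.prod fun j e => (Nat.nth Nat.Prime j) ^ e

lemma enc_ne_zero (κ : ℕ →₀ ℕ) : enc κ ≠ 0 := by
  rw [enc, Finsupp.prod]
  apply Finset.prod_ne_zero_iff.2
  intro j _
  exact pow_ne_zero _ (Nat.Prime.ne_zero (Nat.prime_nth_prime j))

lemma monOf_prime_pow (j e : ℕ) :
    monOf ((Nat.nth Nat.Prime j) ^ e) = MvPolynomial.X j ^ e := by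
  rw [monOf, Nat.Prime.factorization_pow (Nat.prime_nth_prime j)]
  rw [Finsupp.prod_single_index (h := fun p e => MvPolynomial.X (Nat.count Nat.Prime p) ^ e)
    (pow_zero _), Nat.count_nth_of_infinite Nat.infinite_setOf_prime]

lemma monOf_prod {α : Type*} (s : Finset α) (g : α → ℕ) (hg : ∀ a ∈ s, g a ≠ 0) :
    monOf (∏ a ∈ s, g a) = ∏ a ∈ s, monOf (g a) := by
  classical
  induction s using Finset.induction_on with
  | empty => simp [monOf]
  | insert a s h ih =>
    rw [Finset.prod_insert h, Finset.prod_insert h,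
      monOf_mul (hg a (Finset.mem_insert_self a s))
        (Finset.prod_ne_zero_iff.2 fun j hj => hg j (Finset.mem_insert_of_mem hj)),
      ih fun j hj => hg j (Finset.mem_insert_of_mem hj)]

lemma monOf_enc (κ : ℕ →₀ ℕ) : monOf (enc κ) = MvPolynomial.monomial κ 1 := by
  classical
  rw [MvPolynomial.monomial_eq, map_one, one_mul, enc, Finsupp.prod, Finsupp.prod]
  rw [monOf_prod]
  · exact Finset.prod_congr rfl fun j _ => monOf_prime_pow j (κ j)
  · intro j _
    exact pow_ne_zero _ (Nat.Prime.ne_zero (Nat.prime_nth_prime j))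

lemma enc_injective : Function.Injective enc := by
  intro κ μ h
  have := congrArg monOf h
  rw [monOf_enc, monOf_enc] at this
  exact (MvPolynomial.monomial_left_injective (one_ne_zero)) this

lemma double_sum_eq (Λ : MvPolynomial ℕ ℂ →ₗ[ℂ] ℂ) (p : MvPolynomial ℕ ℂ) :
    ∃ f : ℕ →₀ ℂ, f 0 = 0 ∧
      ∑ n ∈ f.support, ∑ m ∈ f.support,
          Λ (monOf (n * m)) * f n * (starRingEnd ℂ) (f m) = Λ (p * sigC p) := by
  classical
  set pf : (ℕ →₀ ℕ) →₀ ℂ := Finsupp.onFinset p.support (fun κ => MvPolynomial.coeff κ p)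
    (fun κ h => MvPolynomial.mem_support_iff.2 h) with hpf
  have hpf_apply : ∀ κ, pf κ = MvPolynomial.coeff κ p := fun κ => rfl
  have hpf_supp : pf.support = p.support := by
    ext κ
    simp [hpf, Finsupp.mem_support_iff, MvPolynomial.mem_support_iff]
  set e : (ℕ →₀ ℕ) ↪ ℕ := ⟨enc, enc_injective⟩ with he
  refine ⟨Finsupp.embDomain e pf, ?_, ?_⟩
  · apply Finsupp.embDomain_notin_range
    rintro ⟨κ, hκ⟩
    exact enc_ne_zero κ hκ
  · rw [Finsupp.support_embDomain, Finset.sum_map]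
    have hterm : ∀ κ ∈ pf.support, ∀ μ ∈ pf.support,
        Λ (monOf (e κ * e μ)) * (Finsupp.embDomain e pf) (e κ) *
          (starRingEnd ℂ) ((Finsupp.embDomain e pf) (e μ))
        = Λ (MvPolynomial.monomial κ (MvPolynomial.coeff κ p) *
            MvPolynomial.monomial μ ((starRingEnd ℂ) (MvPolynomial.coeff μ p))) := by
      intro κ _ μ _
      rw [Finsupp.embDomain_apply_self, Finsupp.embDomain_apply_self]
      have : monOf (e κ * e μ) = MvPolynomial.monomial κ 1 * MvPolynomial.monomial μ 1 := by
        rw [he]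
        simp only [Function.Embedding.coeFn_mk]
        rw [monOf_mul (enc_ne_zero κ) (enc_ne_zero μ), monOf_enc, monOf_enc]
      rw [this, hpf_apply, hpf_apply]
      rw [MvPolynomial.monomial_mul, MvPolynomial.monomial_mul, mul_one]
      have h2 : MvPolynomial.monomial (κ + μ)
          (MvPolynomial.coeff κ p * (starRingEnd ℂ) (MvPolynomial.coeff μ p))
          = (MvPolynomial.coeff κ p * (starRingEnd ℂ) (MvPolynomial.coeff μ p)) •
            MvPolynomial.monomial (κ + μ) (1 : ℂ) := by
        rw [MvPolynomial.smul_monomial, smul_eq_mul, mul_one]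
      rw [h2, map_smul, smul_eq_mul]
      ring
    calc ∑ κ ∈ pf.support, ∑ m ∈ pf.support.map e,
          Λ (monOf (e κ * m)) * (Finsupp.embDomain e pf) (e κ) *
            (starRingEnd ℂ) ((Finsupp.embDomain e pf) m)
        = ∑ κ ∈ pf.support, ∑ μ ∈ pf.support,
            Λ (MvPolynomial.monomial κ (MvPolynomial.coeff κ p) *
              MvPolynomial.monomial μ ((starRingEnd ℂ) (MvPolynomial.coeff μ p))) := by
          refine Finset.sum_congr rfl fun κ hκ => ?_
          rw [Finset.sum_map]
          exact Finset.sum_congr rfl fun μ hμ => hterm κ hκ μ hμ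
      _ = Λ (p * sigC p) := by
          simp_rw [← map_sum]
          congr 1
          rw [← Finset.sum_mul_sum]
          congr 1
          · rw [hpf_supp]
            exact p.support_sum_monomial_coeff
          · rw [hpf_supp]
            have : sigC p = sigC (∑ κ ∈ p.support,
                MvPolynomial.monomial κ (MvPolynomial.coeff κ p)) := by
              rw [p.support_sum_monomial_coeff]
            rw [this, map_sum]
            exact Finset.sum_congr rfl fun κ _ => by simp [sigC, MvPolynomial.map_monomial]

lemma eval_monOf_real (r : ℕ → ℝ) (m : ℕ) :
    ∃ x : ℝ, MvPolynomial.eval (fun j => (r j : ℂ)) (monOf m) = (x : ℂ) := by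
  refine ⟨m.factorization.prod fun p e => (r (Nat.count Nat.Prime p)) ^ e, ?_⟩
  rw [monOf, Finsupp.prod, Finsupp.prod, map_prod]
  push_cast
  exact Finset.prod_congr rfl fun p _ => by rw [map_pow, MvPolynomial.eval_X]

lemma backward_dir (B : MvPolynomial ℕ ℂ →ₗ[ℂ] MvPolynomial ℕ ℂ →ₗ[ℂ] ℂ)
    (L : ℕ) (c : Fin L → ℝ) (lam : Fin L → ℕ → ℝ) (hc : ∀ ℓ, 0 < c ℓ)
    (hrep : ∀ f g, B f g =
      ∑ ℓ, (c ℓ : ℂ) * MvPolynomial.eval (fun j => (lam ℓ j : ℂ)) f *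
        MvPolynomial.eval (fun j => (lam ℓ j : ℂ)) g)
    (f : ℕ →₀ ℂ) (hf0 : f 0 = 0) :
    0 ≤ ∑ n ∈ f.support, ∑ m ∈ f.support,
        B (monOf (n * m)) 1 * f n * (starRingEnd ℂ) (f m) := by
  classical
  set ev : Fin L → ℕ → ℂ := fun ℓ n =>
    MvPolynomial.eval (fun j => (lam ℓ j : ℂ)) (monOf n) with hev
  have hev_real : ∀ ℓ n, (starRingEnd ℂ) (ev ℓ n) = ev ℓ n := by
    intro ℓ n
    obtain ⟨x, hx⟩ := eval_monOf_real (lam ℓ) n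
    rw [hev]
    simp only []
    rw [hx, Complex.conj_ofReal]
  have hne : ∀ n ∈ f.support, n ≠ 0 := by
    intro n hn h0
    exact (Finsupp.mem_support_iff.1 hn) (h0 ▸ hf0)
  have key : ∑ n ∈ f.support, ∑ m ∈ f.support,
        B (monOf (n * m)) 1 * f n * (starRingEnd ℂ) (f m)
      = ∑ ℓ, (c ℓ : ℂ) * ((∑ n ∈ f.support, ev ℓ n * f n) *
          (starRingEnd ℂ) (∑ n ∈ f.support, ev ℓ n * f n)) := by
    calc ∑ n ∈ f.support, ∑ m ∈ f.support,
          B (monOf (n * m)) 1 * f n * (starRingEnd ℂ) (f m)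
        = ∑ n ∈ f.support, ∑ m ∈ f.support, ∑ ℓ,
            (c ℓ : ℂ) * ((ev ℓ n * f n) * (ev ℓ m * (starRingEnd ℂ) (f m))) := by
          refine Finset.sum_congr rfl fun n hn => Finset.sum_congr rfl fun m hm => ?_
          rw [hrep, monOf_mul (hne n hn) (hne m hm)]
          rw [Finset.sum_mul, Finset.sum_mul]
          refine Finset.sum_congr rfl fun ℓ _ => ?_
          rw [map_mul, map_one]
          simp only [hev]
          ring
      _ = ∑ ℓ, ∑ n ∈ f.support, ∑ m ∈ f.support,
            (c ℓ : ℂ) * ((ev ℓ n * f n) * (ev ℓ m * (starRingEnd ℂ) (f m))) := by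
          rw [show (∑ n ∈ f.support, ∑ m ∈ f.support, ∑ ℓ,
              (c ℓ : ℂ) * ((ev ℓ n * f n) * (ev ℓ m * (starRingEnd ℂ) (f m))))
            = ∑ n ∈ f.support, ∑ ℓ, ∑ m ∈ f.support,
              (c ℓ : ℂ) * ((ev ℓ n * f n) * (ev ℓ m * (starRingEnd ℂ) (f m))) from
            Finset.sum_congr rfl fun n _ => Finset.sum_comm]
          exact Finset.sum_comm
      _ = ∑ ℓ, (c ℓ : ℂ) * ((∑ n ∈ f.support, ev ℓ n * f n) *
            (∑ m ∈ f.support, ev ℓ m * (starRingEnd ℂ) (f m))) := by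
          refine Finset.sum_congr rfl fun ℓ _ => ?_
          rw [Finset.sum_mul_sum, Finset.mul_sum]
          refine Finset.sum_congr rfl fun n _ => ?_
          rw [Finset.mul_sum]
      _ = ∑ ℓ, (c ℓ : ℂ) * ((∑ n ∈ f.support, ev ℓ n * f n) *
            (starRingEnd ℂ) (∑ n ∈ f.support, ev ℓ n * f n)) := by
          refine Finset.sum_congr rfl fun ℓ _ => ?_
          congr 1
          congr 1
          rw [map_sum]
          exact Finset.sum_congr rfl fun n _ => by rw [map_mul, hev_real]
  rw [key]
  apply Finset.sum_nonneg
  intro ℓ _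
  rw [Complex.mul_conj]
  rw [show ((c ℓ : ℂ) * (Complex.normSq (∑ n ∈ f.support, ev ℓ n * f n) : ℂ))
      = ((c ℓ * Complex.normSq (∑ n ∈ f.support, ev ℓ n * f n) : ℝ) : ℂ) by push_cast; ring]
  rw [Complex.zero_le_real]
  exact mul_nonneg (hc ℓ).le (Complex.normSq_nonneg _)

lemma lam_C_mul (Λ : P →ₗ[ℂ] ℂ) (c : ℂ) (r : P) :
    Λ (MvPolynomial.C c * r) = c * Λ r := by
  rw [← MvPolynomial.smul_eq_C_mul, map_smul, smul_eq_mul]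

lemma expandL (Λ : P →ₗ[ℂ] ℂ) (t : ℂ) (p q : P) :
    Λ ((MvPolynomial.C t * p + q) * sigC (MvPolynomial.C t * p + q)) =
      (t * conj' t) * Λ (p * sigC p) + t * Λ (p * sigC q)
        + conj' t * Λ (q * sigC p) + Λ (q * sigC q) := by
  have hσ : sigC (MvPolynomial.C t * p + q)
      = MvPolynomial.C (conj' t) * sigC p + sigC q := by
    rw [map_add, map_mul, sigC_C]
  rw [hσ]
  have hring : (MvPolynomial.C t * p + q) * (MvPolynomial.C (conj' t) * sigC p + sigC q)
      = MvPolynomial.C t * (MvPolynomial.C (conj' t) * (p * sigC p))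
        + MvPolynomial.C t * (p * sigC q)
        + MvPolynomial.C (conj' t) * (q * sigC p) + q * sigC q := by ring
  rw [hring, map_add, map_add, map_add, lam_C_mul, lam_C_mul, lam_C_mul, lam_C_mul]
  ring

lemma him (Λ : P →ₗ[ℂ] ℂ) (hpos : ∀ p : P, 0 ≤ Λ (p * sigC p)) (r : P) :
    (Λ (r * sigC r)).im = 0 ∧ 0 ≤ (Λ (r * sigC r)).re := by
  have := hpos r
  rw [Complex.le_def] at this
  exact ⟨this.2.symm.trans Complex.zero_im, Complex.zero_re ▸ this.1⟩

lemma hermL (Λ : P →ₗ[ℂ] ℂ) (hpos : ∀ p : P, 0 ≤ Λ (p * sigC p)) (p q : P) :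
    Λ (q * sigC p) = conj' (Λ (p * sigC q)) := by
  set a := Λ (p * sigC p) with ha'
  set b := Λ (q * sigC q) with hb'
  set u := Λ (p * sigC q) with hu'
  set v := Λ (q * sigC p) with hv'
  have ha : a.im = 0 := (him Λ hpos p).1
  have hb : b.im = 0 := (him Λ hpos q).1
  have e1 : ((1 * conj' 1) * a + 1 * u + conj' 1 * v + b).im = 0 := by
    rw [← expandL]; exact (him Λ hpos _).1
  have e2 : ((Complex.I * conj' Complex.I) * a + Complex.I * u
      + conj' Complex.I * v + b).im = 0 := by
    rw [← expandL]; exact (him Λ hpos _).1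
  simp only [map_one, one_mul, Complex.conj_I] at e1 e2
  rw [Complex.ext_iff]
  constructor
  · have := Complex.add_im _ b ▸ e2
    simp only [Complex.add_im, Complex.mul_im, Complex.I_re, Complex.I_im,
      Complex.neg_im, Complex.neg_re, Complex.mul_re, ha, hb] at e2
    simp only [Complex.conj_re]
    nlinarith [e2]
  · simp only [Complex.add_im, ha, hb] at e1
    simp only [Complex.conj_im]
    linarith [e1]

lemma nullL (Λ : P →ₗ[ℂ] ℂ) (hpos : ∀ p : P, 0 ≤ Λ (p * sigC p))
    (p : P) (hp : Λ (p * sigC p) = 0) (q : P) : Λ (p * sigC q) = 0 := by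
  set u := Λ (p * sigC q) with hu'
  set b := Λ (q * sigC q) with hb'
  by_contra hu
  have hN : Complex.normSq u ≠ 0 := by
    simpa [Complex.normSq_eq_zero] using hu
  set s : ℝ := (b.re + 1) / Complex.normSq u with hs'
  set t : ℂ := -(s : ℂ) * conj' u with ht'
  have hv : Λ (q * sigC p) = conj' u := hermL Λ hpos p q
  have hexp := expandL Λ t p q
  rw [hp, ← hu', hv, ← hb'] at hexp
  have hct : conj' t = -(s : ℂ) * u := by
    rw [ht', map_mul, map_neg, Complex.conj_ofReal, Complex.conj_conj]
  have htu : t * u = -((s : ℂ) * (Complex.normSq u : ℂ)) := by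
    rw [ht']
    have : conj' u * u = (Complex.normSq u : ℂ) := by
      rw [mul_comm, Complex.mul_conj]
    rw [mul_assoc, this]; ring
  have hcu : conj' t * conj' u = -((s : ℂ) * (Complex.normSq u : ℂ)) := by
    rw [hct, mul_assoc, Complex.mul_conj]; ring
  have hsN : s * Complex.normSq u = b.re + 1 := div_mul_cancel₀ _ hN
  have hre := (him Λ hpos (MvPolynomial.C t * p + q)).2
  rw [hexp] at hre
  have hb2 : 0 ≤ b.re := (him Λ hpos q).2
  rw [mul_zero, htu, hcu] at hre
  simp only [Complex.add_re, Complex.neg_re, Complex.zero_re, ← Complex.ofReal_mul,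
    Complex.ofReal_re] at hre
  rw [hsN] at hre
  linarith

lemma char_package (A : Type) [CommRing A] [Algebra ℂ A]
    [FiniteDimensional ℂ A] [IsReduced A] :
    ∃ (n : ℕ) (χ : Fin n → (A →ₐ[ℂ] ℂ)) (eA : Fin n → A),
      (∀ i k, χ i (eA k) = if i = k then 1 else 0) ∧
      (∀ a : A, a = ∑ i, χ i a • eA i) ∧
      (∀ φ : A →ₐ[ℂ] ℂ, ∃ i, ∀ a, φ a = χ i a) := by
  classical
  haveI hart : IsArtinianRing A := IsArtinianRing.of_finite ℂ A
  -- characters attached to maximal ideals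
  have hchar : ∀ I : Ideal A, I.IsMaximal →
      ∃ φ : A →ₐ[ℂ] ℂ, ∀ a, (φ a = 0 ↔ a ∈ I) := by
    intro I hI
    haveI := hI
    letI : Field (A ⧸ I) := Ideal.Quotient.field I
    haveI : FiniteDimensional ℂ (A ⧸ I) :=
      Module.Finite.of_surjective (Ideal.Quotient.mkₐ ℂ I).toLinearMap
        (Ideal.Quotient.mkₐ_surjective ℂ I)
    haveI : Algebra.IsIntegral ℂ (A ⧸ I) := Algebra.IsIntegral.of_finite ℂ _
    have hsurj : Function.Surjective (algebraMap ℂ (A ⧸ I)) :=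
      IsAlgClosed.algebraMap_bijective_of_isIntegral.2
    have hinj : Function.Injective (algebraMap ℂ (A ⧸ I)) :=
      (algebraMap ℂ (A ⧸ I)).injective
    have hbij : Function.Bijective (Algebra.ofId ℂ (A ⧸ I)) := ⟨hinj, hsurj⟩
    set e : ℂ ≃ₐ[ℂ] (A ⧸ I) := AlgEquiv.ofBijective _ hbij with hedef
    refine ⟨(e.symm.toAlgHom).comp (Ideal.Quotient.mkₐ ℂ I), fun a => ?_⟩
    rw [AlgHom.comp_apply]
    rw [show (Ideal.Quotient.mkₐ ℂ I) a = Ideal.Quotient.mk I a from rfl]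
    rw [show (e.symm.toAlgHom) (Ideal.Quotient.mk I a) = e.symm (Ideal.Quotient.mk I a) from rfl]
    rw [EmbeddingLike.map_eq_zero_iff, Ideal.Quotient.eq_zero_iff_mem]
  choose χ₀ hχ₀ using hchar
  haveI hMsfin : Finite {I : Ideal A | I.IsMaximal} :=
    (IsArtinianRing.setOfPred_isMaximal_finite A).to_subtype
  haveI : Fintype {I : Ideal A | I.IsMaximal} := Fintype.ofFinite _
  set n := Fintype.card {I : Ideal A | I.IsMaximal} with hn
  set E : Fin n ≃ {I : Ideal A | I.IsMaximal} := (Fintype.equivFin _).symm with hE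
  set χ : Fin n → (A →ₐ[ℂ] ℂ) := fun i => χ₀ (E i).1 (E i).2 with hχdef
  have hχ : ∀ (i : Fin n) (a : A), χ i a = 0 ↔ a ∈ (E i).1 := fun i a =>
    hχ₀ (E i).1 (E i).2 a
  -- separation
  have hsep : ∀ a : A, (∀ i : Fin n, χ i a = 0) → a = 0 := by
    intro a h
    have hnil : a ∈ nilradical A := by
      rw [nilradical_eq_sInf, Submodule.mem_sInf]
      intro I hI
      have hImax : Ideal.IsMaximal I := (IsArtinianRing.isPrime_iff_isMaximal I).1 hI
      have := h (E.symm ⟨I, hImax⟩)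
      rw [hχ, E.apply_symm_apply] at this
      exact this
    rw [nilradical_eq_zero] at hnil
    simpa using hnil
  -- CRT
  have hCRT : ∀ v : Fin n → ℂ, ∃ a : A, ∀ i : Fin n, χ i a = v i := by
    intro v
    obtain ⟨r, hr⟩ := Ideal.exists_forall_sub_mem_ideal
      (I := fun i : Fin n => (E i).1)
      (fun i k hne => Ideal.isCoprime_iff_sup_eq.mpr <|
        (E i).2.coprime_of_ne (E k).2 (by
          intro hcontra
          exact hne (E.injective (Subtype.ext hcontra))))
      (fun i => algebraMap ℂ A (v i))
    refine ⟨r, fun i => ?_⟩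
    have h1 : χ i (r - algebraMap ℂ A (v i)) = 0 := (hχ i _).2 (hr i)
    rw [map_sub, AlgHom.commutes] at h1
    exact sub_eq_zero.1 h1
  have he : ∀ k : Fin n, ∃ a : A, ∀ i : Fin n, χ i a = if i = k then 1 else 0 :=
    fun k => hCRT _
  choose eA heA using he
  refine ⟨n, χ, eA, fun i k => heA k i, ?_, ?_⟩
  · intro a
    have h : ∀ k : Fin n, χ k (a - ∑ i, χ i a • eA i) = 0 := by
      intro k
      rw [map_sub, map_sum]
      have : ∀ i : Fin n, χ k (χ i a • eA i) = χ i a * (if k = i then 1 else 0) := by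
        intro i
        rw [map_smul, heA i k, smul_eq_mul]
      rw [Finset.sum_congr rfl fun i _ => this i]
      simp [mul_ite]
    have := hsep _ h
    rw [sub_eq_zero] at this
    exact this
  · intro φ
    have hφs : Function.Surjective φ := fun c => ⟨algebraMap ℂ A c, φ.commutes c⟩
    have hK : (RingHom.ker φ).IsMaximal := RingHom.ker_isMaximal_of_surjective φ hφs
    refine ⟨E.symm ⟨RingHom.ker φ, hK⟩, fun a => ?_⟩
    have h1 : a - algebraMap ℂ A (φ a) ∈ RingHom.ker φ := by
      rw [RingHom.mem_ker, map_sub, AlgHom.commutes, sub_eq_zero]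
      exact (Algebra.algebraMap_self_apply _).symm
    have h2 : χ (E.symm ⟨RingHom.ker φ, hK⟩) (a - algebraMap ℂ A (φ a)) = 0 := by
      rw [hχ, E.apply_symm_apply]
      exact h1
    rw [map_sub, AlgHom.commutes, sub_eq_zero, Algebra.algebraMap_self_apply] at h2
    exact h2.symm

noncomputable def kerIdeal (B : P →ₗ[ℂ] P →ₗ[ℂ] ℂ)
    (hmult : ∀ f g, B f g = B (f * g) 1) : Ideal P where
  carrier := (kerForm B : Set P)
  add_mem' h1 h2 := (kerForm B).add_mem h1 h2
  zero_mem' := (kerForm B).zero_mem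
  smul_mem' c x hx := by
    simp only [SetLike.mem_coe, smul_eq_mul] at hx ⊢
    rw [mem_kerForm] at hx ⊢
    intro g
    rw [hmult, show c * x * g = x * (c * g) by ring, ← hmult]
    exact hx (c * g)

lemma mem_kerIdeal_iff (B : P →ₗ[ℂ] P →ₗ[ℂ] ℂ) (hmult : ∀ f g, B f g = B (f * g) 1)
    (p : P) : p ∈ kerIdeal B hmult ↔ p ∈ kerForm B := Iff.rfl

theorem forward_dir (B : P →ₗ[ℂ] P →ₗ[ℂ] ℂ)
    (hmult : ∀ f g, B f g = B (f * g) 1)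
    (hfr : FiniteDimensional ℂ (P ⧸ kerForm B))
    (hpos : ∀ p : P, 0 ≤ B (p * sigC p) 1) :
    ∃ (L : ℕ) (c : Fin L → ℝ) (lam : Fin L → ℕ → ℝ),
      (∀ ℓ, 0 < c ℓ) ∧
      (∀ f g, B f g =
        ∑ ℓ, (c ℓ : ℂ) * MvPolynomial.eval (fun j => (lam ℓ j : ℂ)) f *
          MvPolynomial.eval (fun j => (lam ℓ j : ℂ)) g) := by
  classical
  set Λ : P →ₗ[ℂ] ℂ := B.flip 1 with hΛ
  have hΛ_apply : ∀ p : P, Λ p = B p 1 := fun p => rfl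
  have hB : ∀ f g : P, B f g = Λ (f * g) := fun f g => by
    rw [hΛ_apply]; exact hmult f g
  have hposΛ : ∀ p : P, 0 ≤ Λ (p * sigC p) := fun p => by
    rw [hΛ_apply]; exact hpos p
  have hkermem : ∀ p : P, p ∈ kerForm B ↔ ∀ g, Λ (p * g) = 0 := by
    intro p
    rw [mem_kerForm]
    constructor
    · intro h g; rw [← hB]; exact h g
    · intro h g; rw [hB]; exact h g
  have hker_iff : ∀ p : P, p ∈ kerForm B ↔ Λ (p * sigC p) = 0 := by
    intro p
    constructor
    · intro h; exact (hkermem p).1 h (sigC p)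
    · intro h
      rw [hkermem]
      intro g
      have := nullL Λ hposΛ p h (sigC g)
      rwa [sigC_sigC] at this
  set J : Ideal P := kerIdeal B hmult with hJdef
  have hmemJ : ∀ p : P, p ∈ J ↔ p ∈ kerForm B := fun p => Iff.rfl
  have hres : Submodule.restrictScalars ℂ J = kerForm B := by
    ext x; exact Iff.rfl
  haveI hfinA : FiniteDimensional ℂ (P ⧸ J) := by
    have e1 : (P ⧸ kerForm B) ≃ₗ[ℂ] (P ⧸ Submodule.restrictScalars ℂ J) :=
      Submodule.quotEquivOfEq _ _ hres.symm
    have e2 : (P ⧸ Submodule.restrictScalars ℂ J) ≃ₗ[ℂ] (P ⧸ J) :=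
      Submodule.Quotient.restrictScalarsEquiv ℂ J
    exact Module.Finite.equiv (e1.trans e2)
  set mkA : P →+* P ⧸ J := Ideal.Quotient.mk J with hmkA
  have hmkA_zero : ∀ p : P, mkA p = 0 ↔ p ∈ J := fun p =>
    Ideal.Quotient.eq_zero_iff_mem
  have hmkA_C : ∀ c : ℂ, mkA (MvPolynomial.C c) = algebraMap ℂ (P ⧸ J) c := by
    intro c
    rw [IsScalarTower.algebraMap_apply ℂ P (P ⧸ J), Ideal.Quotient.algebraMap_eq,
      MvPolynomial.algebraMap_eq]
  have hmkA_smul : ∀ (c : ℂ) (p : P), mkA (c • p) = c • mkA p := fun c p => by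
    rw [MvPolynomial.smul_eq_C_mul, map_mul, hmkA_C]
    exact (Algebra.smul_def _ _).symm
  -- conjugation descends
  have hσJ : ∀ p ∈ J, sigC p ∈ J := by
    intro p hp
    rw [hmemJ, hker_iff]
    rw [sigC_sigC, mul_comm]
    exact (hker_iff p).1 hp
  set S : P ⧸ J →+* P ⧸ J := Ideal.Quotient.lift J (mkA.comp sigC)
    (fun p hp => by
      rw [RingHom.comp_apply, hmkA_zero]
      exact hσJ p hp) with hSdef
  have hS : ∀ p : P, S (mkA p) = mkA (sigC p) := fun p =>
    Ideal.Quotient.lift_mk J _ _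
  -- reducedness
  have hsqA : ∀ a : P ⧸ J, a * a = 0 → a = 0 := by
    intro a
    obtain ⟨p, rfl⟩ := Ideal.Quotient.mk_surjective a
    intro hpp
    rw [← map_mul, Ideal.Quotient.eq_zero_iff_mem] at hpp
    rw [Ideal.Quotient.eq_zero_iff_mem]
    have h1 : Λ ((p * sigC p) * sigC (p * sigC p)) = 0 := by
      rw [show (p * sigC p) * sigC (p * sigC p)
          = (p * p) * (sigC p * sigC p) from by rw [map_mul, sigC_sigC]; ring]
      exact (hkermem (p * p)).1 ((hmemJ _).1 hpp) _
    have h2 := nullL Λ hposΛ _ h1 1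
    rw [map_one, mul_one] at h2
    exact (hker_iff p).2 h2
  haveI hred : IsReduced (P ⧸ J) := by
    constructor
    have key : ∀ n (a : P ⧸ J), a ^ (n + 1) = 0 → a = 0 := by
      intro n
      induction n with
      | zero => intro a h; simpa using h
      | succ n ih =>
        intro a h
        refine ih a (hsqA _ ?_)
        rw [← pow_add]
        rw [show n + 1 + (n + 1) = (n + 1 + 1) + n from by ring, pow_add, h, zero_mul]
    rintro x ⟨n, hn⟩
    match n with
    | 0 =>
      simp only [pow_zero] at hn
      haveI : Subsingleton (P ⧸ J) := subsingleton_of_zero_eq_one hn.symm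
      exact Subsingleton.elim x 0
    | n + 1 => exact key n x hn
  obtain ⟨n, χ, eA, hδ, hdecomp, hclass⟩ := char_package (P ⧸ J)
  -- representatives and weights
  have hrepex : ∀ k : Fin n, ∃ p : P, mkA p = eA k := fun k =>
    Ideal.Quotient.mk_surjective (eA k)
  choose repc hrepc using hrepex
  set cc : Fin n → ℂ := fun k => Λ (repc k) with hcc
  -- the functional in terms of characters
  have hLformula : ∀ p : P, Λ p = ∑ i, χ i (mkA p) * cc i := by
    intro p
    have h1 : mkA (p - ∑ i, χ i (mkA p) • repc i) = 0 := by
      rw [map_sub, map_sum]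
      have hterm : ∀ i : Fin n, mkA (χ i (mkA p) • repc i) = χ i (mkA p) • eA i := by
        intro i; rw [hmkA_smul, hrepc]
      rw [Finset.sum_congr rfl fun i _ => hterm i, ← hdecomp (mkA p), sub_self]
    rw [hmkA_zero] at h1
    have h2 : Λ (p - ∑ i, χ i (mkA p) • repc i) = 0 := by
      have := (hkermem _).1 ((hmemJ _).1 h1) 1
      rwa [mul_one] at this
    rw [map_sub, map_sum] at h2
    have h3 : ∀ i : Fin n, Λ (χ i (mkA p) • repc i) = χ i (mkA p) * cc i := fun i => by
      rw [map_smul, smul_eq_mul]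
    rw [Finset.sum_congr rfl fun i _ => h3 i, sub_eq_zero] at h2
    exact h2
  have hBformula : ∀ f g : P, B f g = ∑ i, χ i (mkA f) * χ i (mkA g) * cc i := by
    intro f g
    rw [hB, hLformula (f * g)]
    refine Finset.sum_congr rfl fun i _ => ?_
    rw [map_mul, map_mul]
  -- conjugate characters are characters
  have hψ : ∀ i : Fin n, ∃ k : Fin n, ∀ a, conj' (χ i (S a)) = χ k a := by
    intro i
    have hcom : ∀ c : ℂ, conj' (χ i (S (algebraMap ℂ (P ⧸ J) c))) = c := by
      intro c
      rw [← hmkA_C, hS, sigC_C, hmkA_C, AlgHom.commutes, Algebra.algebraMap_self_apply,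
        Complex.conj_conj]
    obtain ⟨k, hk⟩ := hclass
      { toRingHom := ((starRingEnd ℂ) : ℂ →+* ℂ).comp
          (((χ i : (P ⧸ J) →ₐ[ℂ] ℂ) : (P ⧸ J) →+* ℂ).comp S)
        commutes' := fun c => by
          show conj' (χ i (S (algebraMap ℂ (P ⧸ J) c))) = algebraMap ℂ ℂ c
          rw [hcom, Algebra.algebraMap_self_apply] }
    exact ⟨k, fun a => hk a⟩
  choose τ hτ using hψ
  have hχS : ∀ (i : Fin n) (a : P ⧸ J), χ i (S a) = conj' (χ (τ i) a) := by
    intro i a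
    have := hτ i a
    rw [← this, Complex.conj_conj]
  -- key positivity facts
  have hval : ∀ k : Fin n, Λ (repc k * sigC (repc k))
      = (if τ k = k then 1 else 0) * cc k := by
    intro k
    rw [hLformula]
    have hterm : ∀ i : Fin n, χ i (mkA (repc k * sigC (repc k))) * cc i
        = (if i = k then 1 else 0) * (if τ i = k then 1 else 0) * cc i := by
      intro i
      rw [map_mul, map_mul, ← hS, hrepc, hχS, hδ, hδ,
        show conj' (if τ i = k then (1:ℂ) else 0) = if τ i = k then 1 else 0 from by
          by_cases h : τ i = k <;> simp [h]]
    rw [Finset.sum_congr rfl fun i _ => hterm i]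
    rw [Finset.sum_eq_single k]
    · simp
    · intro i _ hik
      simp [hik]
    · intro h
      exact absurd (Finset.mem_univ k) h
  have hzero_imp : ∀ k : Fin n, Λ (repc k * sigC (repc k)) = 0 → False := by
    intro k h0
    have h1 : repc k ∈ kerForm B := (hker_iff _).2 h0
    have h2 : mkA (repc k) = 0 := (hmkA_zero _).2 ((hmemJ _).2 h1)
    rw [hrepc] at h2
    have h3 := hδ k k
    rw [h2, map_zero, if_pos rfl] at h3
    exact one_ne_zero h3.symm
  have hkey : ∀ k : Fin n, τ k = k ∧ (cc k).im = 0 ∧ 0 < (cc k).re := by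
    intro k
    have hτk : τ k = k := by
      by_contra hne
      apply hzero_imp k
      rw [hval k, if_neg hne, zero_mul]
    have hval' : Λ (repc k * sigC (repc k)) = cc k := by
      rw [hval k, if_pos hτk, one_mul]
    have h1 := him Λ hposΛ (repc k)
    rw [hval'] at h1
    have hne : cc k ≠ 0 := by
      intro h0
      exact hzero_imp k (hval'.trans h0)
    refine ⟨hτk, h1.1, ?_⟩
    rcases lt_or_eq_of_le h1.2 with h | h
    · exact h
    · exfalso
      apply hne
      rw [Complex.ext_iff]
      exact ⟨h.symm.trans Complex.zero_re.symm |>.trans rfl, by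
        rw [h1.1, Complex.zero_im]⟩
  -- reality of the points
  have hreal : ∀ (i : Fin n) (j : ℕ),
      conj' (χ i (mkA (MvPolynomial.X j))) = χ i (mkA (MvPolynomial.X j)) := by
    intro i j
    have := hτ i (mkA (MvPolynomial.X j))
    rw [hS, sigC_X, (hkey i).1] at this
    exact this
  -- evaluation formula
  have heval : ∀ (i : Fin n) (f : P),
      χ i (mkA f) = MvPolynomial.eval (fun j => χ i (mkA (MvPolynomial.X j))) f := by
    intro i f
    have h1 := MvPolynomial.aeval_unique ((χ i).comp (Ideal.Quotient.mkₐ ℂ J))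
    have h2 : χ i (mkA f) = ((χ i).comp (Ideal.Quotient.mkₐ ℂ J)) f := rfl
    rw [h2, h1, MvPolynomial.aeval_def]
    rw [show algebraMap ℂ ℂ = RingHom.id ℂ from Algebra.algebraMap_self]
    rfl
  refine ⟨n, fun i => (cc i).re, fun i j => (χ i (mkA (MvPolynomial.X j))).re,
    fun i => (hkey i).2.2, ?_⟩
  intro f g
  rw [hBformula f g]
  refine Finset.sum_congr rfl fun i _ => ?_
  have hccr : ((cc i).re : ℂ) = cc i := by
    rw [Complex.ext_iff]
    exact ⟨Complex.ofReal_re _, by rw [Complex.ofReal_im, (hkey i).2.1]⟩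
  have hlam : (fun j => (((χ i (mkA (MvPolynomial.X j))).re : ℝ) : ℂ))
      = fun j => χ i (mkA (MvPolynomial.X j)) :=
    funext fun j => Complex.conj_eq_iff_re.1 (hreal i j)
  rw [hlam, ← heval i f, ← heval i g, hccr]
  ring

theorem stmt9 (B : MvPolynomial ℕ ℂ →ₗ[ℂ] MvPolynomial ℕ ℂ →ₗ[ℂ] ℂ)
    (hmult : ∀ f g, B f g = B (f * g) 1)
    (hfr : FiniteDimensional ℂ (MvPolynomial ℕ ℂ ⧸ kerForm B)) :
    (∀ f : ℕ →₀ ℂ, f 0 = 0 →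
        0 ≤ ∑ n ∈ f.support, ∑ m ∈ f.support,
              B (monOf (n * m)) 1 * f n * (starRingEnd ℂ) (f m)) ↔
      ∃ (L : ℕ) (c : Fin L → ℝ) (lam : Fin L → ℕ → ℝ),
        (∀ ℓ, 0 < c ℓ) ∧
        (∀ f g, B f g =
          ∑ ℓ, (c ℓ : ℂ) * MvPolynomial.eval (fun j => (lam ℓ j : ℂ)) f *
            MvPolynomial.eval (fun j => (lam ℓ j : ℂ)) g) := by
  constructor
  · intro h
    apply forward_dir B hmult hfr
    intro p
    obtain ⟨f, hf0, hsum⟩ := double_sum_eq (B.flip 1) p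
    simp only [LinearMap.flip_apply] at hsum
    have h2 := h f hf0
    rw [hsum] at h2
    exact h2
  · rintro ⟨L, c, lam, hc, hrep⟩ f hf0
    exact backward_dir B L c lam hc hrep f hf0

end HelsonAux
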